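/- Let k be an algebraically closed field and let R be a k-algebra satisfying the weak Nullstellensatz, i.e., for every simple R-module V the center of End_R(V) is algebraic over k. Then every primitive ideal of R is rational, i.e., the extended centroid of R modulo the ideal equals k. -/

import Mathlib

section Aux
variable {R : Type*} [Ring R] {V : Type*} [AddCommGroup V] [Module R V]
variable (P : TwoSidedIdeal R)

def qsmul (hP : ∀ r : R, r ∈ P ↔ ∀ v : V, r • v = 0) (q : P.ringCon.Quotient) (v : V) : V :=
  Quotient.liftOn q (fun r => r • v) (by
    intro a b hab
    have hmem : a - b ∈ P := (P.rel_iff a b).mp hab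
    have h0 := (hP _).mp hmem v
    rw [sub_smul, sub_eq_zero] at h0
    exact h0)

variable (hP : ∀ r : R, r ∈ P ↔ ∀ v : V, r • v = 0)

@[simp] theorem qsmul_mk' (r : R) (v : V) : qsmul P hP (P.ringCon.mk' r) v = r • v := rfl

@[simp] theorem qsmul_coe (r : R) (v : V) : qsmul P hP (r : P.ringCon.Quotient) v = r • v := rfl

theorem qsmul_surj (q : P.ringCon.Quotient) : ∃ r : R, P.ringCon.mk' r = q := Quotient.exists_rep q

theorem qsmul_add_right (q : P.ringCon.Quotient) (v w : V) :
    qsmul P hP q (v + w) = qsmul P hP q v + qsmul P hP q w := by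
  obtain ⟨r, rfl⟩ := qsmul_surj P q
  simp [smul_add]

theorem qsmul_mul (q q' : P.ringCon.Quotient) (v : V) :
    qsmul P hP (q * q') v = qsmul P hP q (qsmul P hP q' v) := by
  obtain ⟨r, rfl⟩ := qsmul_surj P q
  obtain ⟨s, rfl⟩ := qsmul_surj P q'
  exact mul_smul r s v

theorem qsmul_smul (r : R) (q : P.ringCon.Quotient) (v : V) :
    r • qsmul P hP q v = qsmul P hP (P.ringCon.mk' r * q) v := by
  obtain ⟨s, rfl⟩ := qsmul_surj P q
  exact (mul_smul r s v).symm

@[simp] theorem qsmul_zero_left (v : V) : qsmul P hP 0 v = 0 := by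
  have : (0 : P.ringCon.Quotient) = P.ringCon.mk' 0 := (map_zero _).symm
  rw [this, qsmul_mk', zero_smul]

@[simp] theorem qsmul_zero_right (q : P.ringCon.Quotient) : qsmul P hP q 0 = 0 := by
  obtain ⟨r, rfl⟩ := qsmul_surj P q
  simp

theorem qsmul_faithful (q : P.ringCon.Quotient) (h : ∀ v : V, qsmul P hP q v = 0) : q = 0 := by
  obtain ⟨r, rfl⟩ := qsmul_surj P q
  have : r ∈ P := (hP r).mpr (fun v => h v)
  have h0 : P.ringCon r 0 := by
    rw [P.rel_iff r 0]; simpa using this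
  exact (RingCon.eq _).mpr h0

end Aux
open Polynomial

theorem list_prod_scalar {k : Type*} [Field k] {R V : Type*} [Ring R] [AddCommGroup V]
    [Module R V] [Module k V] [SMulCommClass R k V] [SMul k R] [IsScalarTower k R V] [IsSimpleModule R V]
    (δ : Module.End R V) :
    ∀ l : List k, (l.map fun c => δ - algebraMap k (Module.End R V) c).prod = 0 →
      ∃ c : k, δ = algebraMap k (Module.End R V) c := by
  intro l
  induction l with
  | nil =>
    intro h
    simp only [List.map_nil, List.prod_nil] at h
    exfalso
    have : Nontrivial V := IsSimpleModule.nontrivial R V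
    obtain ⟨v, hv⟩ := exists_ne (0 : V)
    exact hv (by simpa using congrFun (congrArg DFunLike.coe h) v)
  | cons c t ih =>
    intro h
    simp only [List.map_cons, List.prod_cons] at h
    by_cases hc : δ - algebraMap k (Module.End R V) c = 0
    · exact ⟨c, by rwa [sub_eq_zero] at hc⟩
    · apply ih
      have hbij := (δ - algebraMap k (Module.End R V) c).bijective_or_eq_zero.resolve_right hc
      ext v
      have := congrFun (congrArg DFunLike.coe h) v
      simp only [Module.End.mul_apply, LinearMap.zero_apply] at this ⊢
      exact hbij.injective (by simpa using this)

theorem aeval_linear_factors {k : Type*} [Field k] {R V : Type*} [Ring R] [AddCommGroup V]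
    [Module R V] [Module k V] [SMulCommClass R k V] [SMul k R] [IsScalarTower k R V]
    (δ : Module.End R V) (l : List k) :
    aeval δ (l.map fun a => X - C a).prod = (l.map fun c => δ - algebraMap k (Module.End R V) c).prod := by
  induction l with
  | nil => simp
  | cons c t ih => simp [ih]

theorem alg_scalar {k : Type*} [Field k] [IsAlgClosed k] {R V : Type*} [Ring R] [AddCommGroup V]
    [Module R V] [Module k V] [SMulCommClass R k V] [SMul k R] [IsScalarTower k R V] [IsSimpleModule R V]
    (δ : Module.End R V) (halg : IsAlgebraic k δ) :
    ∃ c : k, δ = algebraMap k (Module.End R V) c := by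
  obtain ⟨p, hp0, hpe⟩ := halg
  set a := p.leadingCoeff with ha
  have hsplit : p = C a * (p.roots.map fun a => X - C a).prod :=
    (IsAlgClosed.splits p).eq_prod_roots
  set l : List k := p.roots.toList with hl
  have hml : p.roots = (l : Multiset k) := (Multiset.coe_toList _).symm
  have hp' : p = C a * (l.map fun a => X - C a).prod := by
    rw [hsplit, hml, Multiset.map_coe, Multiset.prod_coe]
  have h2 : (0 : Module.End R V) =
      algebraMap k (Module.End R V) a *
        (l.map fun c => δ - algebraMap k (Module.End R V) c).prod := by
    rw [← hpe]
    conv_lhs => rw [hp']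
    rw [map_mul, aeval_C, aeval_linear_factors]
  have hlead : a ≠ 0 := leadingCoeff_ne_zero.mpr hp0
  have h3 : (l.map fun c => δ - algebraMap k (Module.End R V) c).prod = 0 := by
    have := congrArg (fun z => algebraMap k (Module.End R V) a⁻¹ * z) h2
    simp only [mul_zero, ← mul_assoc, ← map_mul, inv_mul_cancel₀ hlead, map_one, one_mul] at this
    exact this.symm
  exact list_prod_scalar δ l h3

/-- `f` restricts to an `(R,R)`-bimodule map on the two-sided ideal `I`. -/
def IsBimodOn {R : Type*} [Ring R] (I : TwoSidedIdeal R) (f : R → R) : Prop :=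
  (∀ x ∈ I, ∀ y ∈ I, f (x + y) = f x + f y) ∧
  (∀ r : R, ∀ x ∈ I, f (r * x) = r * f x) ∧
  (∀ r : R, ∀ x ∈ I, f (x * r) = f x * r)

/-- Let `k` be an algebraically closed field and `R` a `k`-algebra satisfying the weak
Nullstellensatz: for each simple module `V`, the center of `End_R(V)` is algebraic over
`k`. Then every primitive ideal `P = ann_R(V)` is rational: the extended centroid of
`R/P` equals `k`, i.e. every `(R/P,R/P)`-bimodule map on an ideal of `R/P` with zero
left annihilator is multiplication by a scalar from `k`. -/
theorem primitive_ideals_are_rational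
    {k : Type*} [Field k] [IsAlgClosed k] {R : Type*} [Ring R] [Algebra k R]
    (V : Type*) [AddCommGroup V] [Module R V] [Module k V]
    [SMulCommClass R k V] [IsScalarTower k R V]
    (hsimple : IsSimpleModule R V)
    (hNS : ∀ δ ∈ Subring.center (Module.End R V), IsAlgebraic k δ)
    (P : TwoSidedIdeal R) (hP : ∀ r : R, r ∈ P ↔ ∀ v : V, r • v = 0) :
    ∀ I : TwoSidedIdeal P.ringCon.Quotient,
      (∀ r : P.ringCon.Quotient, (∀ x ∈ I, r * x = 0) → r = 0) →
      ∀ f : P.ringCon.Quotient → P.ringCon.Quotient, IsBimodOn I f →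
        ∃ c : k, ∀ x ∈ I, f x = P.ringCon.mk' (algebraMap k R c) * x := by
  intro I hann f hf
  by_cases hex : ∃ x ∈ I, x ≠ 0
  swap
  · -- degenerate case: I = 0, so the quotient ring is trivial
    push_neg at hex
    have h1 : (1 : P.ringCon.Quotient) = 0 := hann 1 (fun x hx => by rw [one_mul]; exact hex x hx)
    have : Subsingleton P.ringCon.Quotient := subsingleton_of_zero_eq_one h1.symm
    exact ⟨0, fun x _ => Subsingleton.elim _ _⟩
  obtain ⟨x₀, hx₀I, hx₀⟩ := hex
  have hfa : ∃ v : V, qsmul P hP x₀ v ≠ 0 := by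
    by_contra hcon
    push_neg at hcon
    exact hx₀ (qsmul_faithful P hP x₀ hcon)
  obtain ⟨v₀, hv₀⟩ := hfa
  -- the graph submodule
  set S : Set (V × V) :=
    {p | ∃ x ∈ I, ∃ v : V, p = (qsmul P hP x v, qsmul P hP (f x) v)} with hS
  set G : Submodule R (V × V) := Submodule.span R S with hG
  -- Fact A : every element of G satisfies the intertwining property
  have factA : ∀ p ∈ G, ∀ y ∈ I, qsmul P hP y p.2 = qsmul P hP (f y) p.1 := by
    intro p hp
    induction hp using Submodule.span_induction with
    | mem p hpS =>
      obtain ⟨x, hxI, v, rfl⟩ := hpS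
      intro y hyI
      have key : y * f x = f y * x := by
        rw [← hf.2.1 y x hxI, hf.2.2 x y hyI]
      simp only [← qsmul_mul]
      rw [key]
    | zero => intro y hy; simp
    | add p q hp hq ihp ihq =>
      intro y hy
      simp only [Prod.snd_add, Prod.fst_add, qsmul_add_right, ihp y hy, ihq y hy]
    | smul r p hp ihp =>
      intro y hy
      have h1 : qsmul P hP y (r • p.2) = qsmul P hP (y * P.ringCon.mk' r) p.2 := by
        rw [qsmul_mul]; simp
      have h2 : qsmul P hP (f y) (r • p.1) = qsmul P hP (f y * P.ringCon.mk' r) p.1 := by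
        rw [qsmul_mul]; simp
      have hyr : y * P.ringCon.mk' r ∈ I := I.mul_mem_right _ _ hy
      have := ihp (y * P.ringCon.mk' r) hyr
      rw [hf.2.2 (P.ringCon.mk' r) y hy] at this
      simpa [h1, h2, Prod.smul_snd, Prod.smul_fst] using this
  -- the submodule annihilated by I is ⊥
  have hA : ∀ w : V, (∀ y ∈ I, qsmul P hP y w = 0) → w = 0 := by
    set A : Submodule R V :=
      { carrier := {v | ∀ y ∈ I, qsmul P hP y v = 0}
        add_mem' := fun ha hb y hy => by rw [qsmul_add_right, ha y hy, hb y hy, add_zero]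
        zero_mem' := fun y hy => qsmul_zero_right P hP y
        smul_mem' := fun r v hv y hy => by
          have : qsmul P hP y (r • v) = qsmul P hP (y * P.ringCon.mk' r) v := by
            rw [qsmul_mul]; simp
          rw [this]
          exact hv _ (I.mul_mem_right _ _ hy) } with hAdef
    have hAne : A ≠ ⊤ := by
      intro htop
      have : v₀ ∈ A := htop ▸ Submodule.mem_top
      exact hv₀ (this x₀ hx₀I)
    have : A = ⊥ := (hsimple.1.eq_bot_or_eq_top A).resolve_right hAne
    intro w hw
    have : w ∈ A := hw
    rwa [‹A = ⊥›, Submodule.mem_bot] at this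
  -- graph uniqueness
  have huniq : ∀ v w w' : V, (v, w) ∈ G → (v, w') ∈ G → w = w' := by
    intro v w w' h1 h2
    have h3 : ((0 : V), w - w') ∈ G := by
      have := G.sub_mem h1 h2
      simpa using this
    have h4 := factA _ h3
    simp only [] at h4
    have : w - w' = 0 := hA _ (fun y hy => by simpa using h4 y hy)
    exact sub_eq_zero.mp this
  -- totality
  have htot : ∀ v : V, ∃ w : V, (v, w) ∈ G := by
    set W : Submodule R V := Submodule.map (LinearMap.fst R V V) G with hW
    have hWne : W ≠ ⊥ := by
      intro hbot
      apply hv₀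
      have hmem : (qsmul P hP x₀ v₀, qsmul P hP (f x₀) v₀) ∈ G :=
        Submodule.subset_span ⟨x₀, hx₀I, v₀, rfl⟩
      have : qsmul P hP x₀ v₀ ∈ W := ⟨_, hmem, rfl⟩
      rwa [hbot, Submodule.mem_bot] at this
    have hWtop : W = ⊤ := (hsimple.1.eq_bot_or_eq_top W).resolve_left hWne
    intro v
    have : v ∈ W := hWtop ▸ Submodule.mem_top
    obtain ⟨p, hpG, hp1⟩ := this
    refine ⟨p.2, ?_⟩
    have hp1' : p.1 = v := hp1
    rw [← hp1', Prod.mk.eta]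
    exact hpG
  choose δfun hδ using htot
  have hadd : ∀ v v' : V, δfun (v + v') = δfun v + δfun v' := by
    intro v v'
    have h1 : (v + v', δfun v + δfun v') ∈ G := by
      have := G.add_mem (hδ v) (hδ v')
      simpa using this
    exact huniq _ _ _ (hδ _) h1
  have hsmul : ∀ (r : R) (v : V), δfun (r • v) = r • δfun v := by
    intro r v
    have h1 : (r • v, r • δfun v) ∈ G := by
      have := G.smul_mem r (hδ v)
      simpa [Prod.smul_mk] using this
    exact huniq _ _ _ (hδ _) h1
  set Δ : Module.End R V :=
    { toFun := δfun
      map_add' := hadd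
      map_smul' := hsmul } with hΔdef
  -- centrality
  have hcent : Δ ∈ Subring.center (Module.End R V) := by
    rw [Subring.mem_center_iff]
    intro g
    ext v
    have hGg : ∀ p ∈ G, ((g p.1, g p.2) : V × V) ∈ G := by
      intro p hp
      induction hp using Submodule.span_induction with
      | mem p hpS =>
        obtain ⟨x, hxI, v, rfl⟩ := hpS
        have e1 : g (qsmul P hP x v) = qsmul P hP x (g v) := by
          obtain ⟨r, rfl⟩ := qsmul_surj P x
          simp [map_smul]
        have e2 : g (qsmul P hP (f x) v) = qsmul P hP (f x) (g v) := by
          obtain ⟨r, hr⟩ := qsmul_surj P (f x)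
          rw [← hr]
          simp [map_smul]
        rw [e1, e2]
        exact Submodule.subset_span ⟨x, hxI, g v, rfl⟩
      | zero => simp; exact G.zero_mem
      | add p q hp hq ihp ihq => simpa [map_add] using G.add_mem ihp ihq
      | smul r p hp ihp => simpa [map_smul] using G.smul_mem r ihp
    have h1 : (g v, g (δfun v)) ∈ G := hGg _ (hδ v)
    have h2 : (g v, δfun (g v)) ∈ G := hδ _
    have := huniq _ _ _ h2 h1
    simpa [hΔdef] using this.symm
  obtain ⟨c, hc⟩ := alg_scalar Δ (hNS Δ hcent)
  refine ⟨c, fun x hx => ?_⟩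
  have key : ∀ v : V, qsmul P hP (f x - P.ringCon.mk' (algebraMap k R c) * x) v = 0 := by
    intro v
    have hsub : qsmul P hP (f x - P.ringCon.mk' (algebraMap k R c) * x) v =
        qsmul P hP (f x) v - qsmul P hP (P.ringCon.mk' (algebraMap k R c) * x) v := by
      obtain ⟨r, hr⟩ := qsmul_surj P (f x)
      obtain ⟨s, hs⟩ := qsmul_surj P (P.ringCon.mk' (algebraMap k R c) * x)
      rw [← hr, ← hs, ← map_sub P.ringCon.mk' r s]
      exact sub_smul r s v
    rw [hsub]
    have h1 : (qsmul P hP x v, qsmul P hP (f x) v) ∈ G :=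
      Submodule.subset_span ⟨x, hx, v, rfl⟩
    have h3 : qsmul P hP (f x) v = δfun (qsmul P hP x v) :=
      huniq _ _ _ h1 (hδ _)
    have h4 : Δ (qsmul P hP x v) = c • qsmul P hP x v := by
      rw [hc]; rfl
    have h5 : qsmul P hP (P.ringCon.mk' (algebraMap k R c) * x) v = c • qsmul P hP x v := by
      rw [← qsmul_smul, algebraMap_smul]
    rw [h3, h5]
    have : δfun (qsmul P hP x v) = c • qsmul P hP x v := h4
    rw [this, sub_self]
  have := qsmul_faithful P hP _ key
  exact sub_eq_zero.mp this
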